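/- If a ∈ ℤ[j] is not a zero divisor (η(a) ≠ 0), is irreducible in ℤ[j], and is not a prime element of ℤ[j], then η⁺(a) = 2^γ for some natural number γ ≥ 1. -/

import Mathlib

namespace HypInt

/-- "Light-cone" coordinates: `U z = z.re + z.im`. -/
def U (z : ℤ√1) : ℤ := z.re + z.im

/-- `V z = z.re - z.im`. -/
def V (z : ℤ√1) : ℤ := z.re - z.im

lemma U_mul (b c : ℤ√1) : U (b * c) = U b * U c := by
  simp [U, Zsqrtd.re_mul, Zsqrtd.im_mul]; ring

lemma V_mul (b c : ℤ√1) : V (b * c) = V b * V c := by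
  simp [V, Zsqrtd.re_mul, Zsqrtd.im_mul]; ring

lemma norm_eq (z : ℤ√1) : z.norm = U z * V z := by
  simp [Zsqrtd.norm_def, U, V]; ring

lemma ext' {w z : ℤ√1} (h1 : U w = U z) (h2 : V w = V z) : w = z := by
  have := w.2; have := z.2
  simp only [U, V] at h1 h2
  ext <;> omega

lemma parity_UV (z : ℤ√1) : Even (U z) ↔ Even (V z) := by
  unfold U V
  rw [Int.even_add, Int.even_sub]

lemma odd_V_of_odd_U {z : ℤ√1} (h : Odd (U z)) : Odd (V z) := by
  rw [← Int.not_even_iff_odd] at h ⊢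
  rwa [← parity_UV]

lemma odd_U_of_odd_V {z : ℤ√1} (h : Odd (V z)) : Odd (U z) := by
  rw [← Int.not_even_iff_odd] at h ⊢
  rwa [parity_UV]

lemma dvd_of {b z : ℤ√1} (hodd : Odd (U b)) (h1 : U b ∣ U z) (h2 : V b ∣ V z) :
    b ∣ z := by
  have hoddV : Odd (V b) := odd_V_of_odd_U hodd
  obtain ⟨s, hs⟩ := h1
  obtain ⟨t, ht⟩ := h2
  have hps : Even s ↔ Even (U z) := by
    rw [hs, Int.even_mul]
    simp [Int.not_even_iff_odd.2 hodd]
  have hpt : Even t ↔ Even (V z) := by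
    rw [ht, Int.even_mul]
    simp [Int.not_even_iff_odd.2 hoddV]
  have hst : Even s ↔ Even t := by rw [hps, hpt, parity_UV]
  have hst2 : Even (s + t) := by
    rcases Int.even_or_odd s with h | h
    · exact Even.add h (hst.1 h)
    · exact Odd.add_odd h (by rwa [← Int.not_even_iff_odd, ← hst, Int.not_even_iff_odd])
  have hst3 : Even (s - t) := by
    rcases hst2 with ⟨m, hm⟩; exact ⟨m - t, by omega⟩
  obtain ⟨m, hm⟩ := hst2
  obtain ⟨n, hn⟩ := hst3
  refine ⟨⟨m, n⟩, (ext' ?_ ?_).symm⟩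
  · rw [U_mul, hs]; congr 1; simp only [U]; omega
  · rw [V_mul, ht]; congr 1; simp only [V]; omega

lemma U_dvd_of_dvd {b z : ℤ√1} (h : b ∣ z) : U b ∣ U z := by
  obtain ⟨c, rfl⟩ := h; rw [U_mul]; exact dvd_mul_right _ _

lemma V_dvd_of_dvd {b z : ℤ√1} (h : b ∣ z) : V b ∣ V z := by
  obtain ⟨c, rfl⟩ := h; rw [V_mul]; exact dvd_mul_right _ _

lemma norm_isUnit {z : ℤ√1} (h : IsUnit z) : IsUnit z.norm := by
  obtain ⟨w, hw⟩ := isUnit_iff_exists_inv.1 h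
  exact IsUnit.of_mul_eq_one w.norm (by rw [← Zsqrtd.norm_mul, hw, Zsqrtd.norm_one])

lemma UV_isUnit {z : ℤ√1} (h : IsUnit z) : IsUnit (U z) ∧ IsUnit (V z) := by
  have := norm_isUnit h
  rw [norm_eq] at this
  exact ⟨isUnit_of_mul_isUnit_left this, isUnit_of_mul_isUnit_right this⟩

lemma prime_of {b : ℤ√1} (hp : Prime (U b)) (hodd : Odd (U b)) (hV : IsUnit (V b)) :
    Prime b := by
  refine ⟨?_, ?_, ?_⟩
  · rintro rfl
    exact hp.ne_zero (by simp [U])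
  · intro h
    exact hp.not_unit ((UV_isUnit h).1)
  · intro z₁ z₂ hdvd
    have := U_dvd_of_dvd hdvd
    rw [U_mul] at this
    rcases hp.2.2 _ _ this with h | h
    · exact Or.inl (dvd_of hodd h (hV.dvd))
    · exact Or.inr (dvd_of hodd h (hV.dvd))

lemma prime_of' {b : ℤ√1} (hp : Prime (V b)) (hodd : Odd (V b)) (hU : IsUnit (U b)) :
    Prime b := by
  have hoddU : Odd (U b) := odd_U_of_odd_V hodd
  refine ⟨?_, ?_, ?_⟩
  · rintro rfl
    exact hp.ne_zero (by simp [V])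
  · intro h
    exact hp.not_unit ((UV_isUnit h).2)
  · intro z₁ z₂ hdvd
    have := V_dvd_of_dvd hdvd
    rw [V_mul] at this
    rcases hp.2.2 _ _ this with h | h
    · exact Or.inl (dvd_of hoddU (hU.dvd) h)
    · exact Or.inr (dvd_of hoddU (hU.dvd) h)

/-- the element with `U = 2k+1`, `V = 1`. -/
def bp (k : ℤ) : ℤ√1 := ⟨k + 1, k⟩

/-- the element with `U = 1`, `V = 2k+1`. -/
def bp' (k : ℤ) : ℤ√1 := ⟨k + 1, -k⟩

lemma U_bp (k : ℤ) : U (bp k) = 2 * k + 1 := by simp [U, bp]; ring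
lemma V_bp (k : ℤ) : V (bp k) = 1 := by simp [V, bp]
lemma U_bp' (k : ℤ) : U (bp' k) = 1 := by simp [U, bp']
lemma V_bp' (k : ℤ) : V (bp' k) = 2 * k + 1 := by simp [V, bp']; ring

end HypInt

open HypInt in
/-- If `a ∈ ℤ[j]` is not a zero divisor (`norm a ≠ 0`), is irreducible but not prime,
then `η⁺(a) = |norm a| = 2^γ` for some natural `γ ≥ 1`. -/
theorem norm_of_irreducible_not_prime (a : ℤ√1) (ha : Zsqrtd.norm a ≠ 0)
    (hirr : Irreducible a) (hnp : ¬ Prime a) :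
    ∃ γ : ℕ, 1 ≤ γ ∧ |Zsqrtd.norm a| = 2 ^ γ := by
  have hnorm := norm_eq a
  -- general step: any odd prime p dividing norm a forces `a` to be prime-like or norm = ±p
  have key : ∀ p : ℤ, Prime p → Odd p → p ∣ a.norm → |a.norm| = |p| := by
    intro p hp hpodd hpdvd
    obtain ⟨k, hk⟩ := hpodd
    rw [hnorm] at hpdvd
    rcases hp.2.2 _ _ hpdvd with hdU | hdV
    · -- use bp k
      have hUb : U (bp k) = p := by rw [U_bp, hk]
      have hbdvd : bp k ∣ a := dvd_of (by rw [hUb]; exact ⟨k, hk⟩) (hUb ▸ hdU) (by rw [V_bp]; exact one_dvd _)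
      obtain ⟨c, hc⟩ := hbdvd
      rcases hirr.isUnit_or_isUnit hc with h | h
      · exact absurd ((UV_isUnit h).1) (hUb ▸ hp.not_unit)
      · have : a.norm = p * c.norm := by
          rw [hc, Zsqrtd.norm_mul, norm_eq (bp k), hUb, V_bp, mul_one]
        rw [this, abs_mul]
        have := Int.isUnit_iff.1 (norm_isUnit h)
        rcases this with h1 | h1 <;> simp [h1]
    · -- use bp' k
      have hVb : V (bp' k) = p := by rw [V_bp', hk]
      have hbdvd : bp' k ∣ a :=
        dvd_of (by rw [U_bp']; exact odd_one) (by rw [U_bp']; exact one_dvd _) (hVb ▸ hdV)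
      obtain ⟨c, hc⟩ := hbdvd
      rcases hirr.isUnit_or_isUnit hc with h | h
      · exact absurd ((UV_isUnit h).2) (hVb ▸ hp.not_unit)
      · have : a.norm = p * c.norm := by
          rw [hc, Zsqrtd.norm_mul, norm_eq (bp' k), hVb, U_bp', one_mul]
        rw [this, abs_mul]
        have := Int.isUnit_iff.1 (norm_isUnit h)
        rcases this with h1 | h1 <;> simp [h1]
  rcases Int.even_or_odd (U a) with hEU | hOU
  · -- even case: no odd prime divides norm a, so it is a power of 2
    have hnatne : a.norm.natAbs ≠ 0 := fun h => ha (Int.natAbs_eq_zero.1 h)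
    have hEnorm : Even a.norm := by
      rw [hnorm, Int.even_mul]; exact Or.inl hEU
    have hq2 : ∀ {q : ℕ}, Nat.Prime q → q ∣ a.norm.natAbs → q = 2 := by
      intro q hq hqd
      by_contra hq2
      have hqodd : Odd q := hq.odd_of_ne_two hq2
      have hpdvd : (q : ℤ) ∣ a.norm := Int.dvd_natAbs.1 (Int.natCast_dvd_natCast.2 hqd)
      have habs := key q (Nat.prime_iff_prime_int.1 hq) (Int.odd_coe_nat q |>.2 hqodd) hpdvd
      have : a.norm.natAbs = q := by
        have := congrArg Int.natAbs habs
        simpa [Int.natAbs_abs] using this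
      have : Odd a.norm.natAbs := this ▸ hqodd
      rw [Int.natAbs_odd] at this
      exact (Int.not_odd_iff_even.2 hEnorm) this
    have hpow := Nat.eq_prime_pow_of_unique_prime_dvd hnatne (fun {d} hd hdd => hq2 hd hdd)
    set γ := a.norm.natAbs.primeFactorsList.length with hγ
    refine ⟨γ, ?_, ?_⟩
    · by_contra h
      have hγ0 : γ = 0 := by omega
      rw [hγ0, pow_zero] at hpow
      have : Odd a.norm.natAbs := hpow ▸ odd_one
      rw [Int.natAbs_odd] at this
      exact (Int.not_odd_iff_even.2 hEnorm) this
    · rw [Int.abs_eq_natAbs, hpow]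
      push_cast
      ring
  · -- odd case: norm a is odd; either a is a unit or a is prime, both contradictions
    exfalso
    have hOV : Odd (V a) := by
      rw [← Int.not_even_iff_odd, ← parity_UV, Int.not_even_iff_odd]; exact hOU
    have hOnorm : Odd a.norm := by rw [hnorm]; exact hOU.mul hOV
    have hnatne : a.norm.natAbs ≠ 0 := fun h => ha (Int.natAbs_eq_zero.1 h)
    by_cases h1 : a.norm.natAbs = 1
    · -- a is a unit
      apply hirr.not_isUnit
      have key2 : a * (star a * (a.norm : ℤ√1)) = ((a.norm : ℤ√1)) ^ 2 := by
        rw [← mul_assoc, ← Zsqrtd.norm_eq_mul_conj]; ring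
      have h2 : a.norm = 1 ∨ a.norm = -1 := Int.natAbs_eq_iff.1 h1 |>.imp id id
      have hsq : ((a.norm : ℤ√1)) ^ 2 = 1 := by
        rcases h2 with h2 | h2 <;> rw [h2] <;> push_cast <;> ring
      exact IsUnit.of_mul_eq_one _ (key2.trans hsq)
    · obtain ⟨q, hq, hqd⟩ := Nat.exists_prime_and_dvd h1
      have hpdvd : (q : ℤ) ∣ a.norm := Int.dvd_natAbs.1 (Int.natCast_dvd_natCast.2 hqd)
      have hqodd : Odd q := by
        rcases hq.eq_two_or_odd' with rfl | h
        · exfalso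
          have hna : Odd a.norm.natAbs := Int.natAbs_odd.2 hOnorm
          obtain ⟨m, hm⟩ := hna
          obtain ⟨l, hl⟩ := hqd
          omega
        · exact h
      have hp : Prime (q : ℤ) := Nat.prime_iff_prime_int.1 hq
      have hpodd : Odd (q : ℤ) := Int.odd_coe_nat q |>.2 hqodd
      -- a itself must be "prime": from key we get |norm a| = q
      rw [hnorm] at hpdvd
      rcases hp.2.2 _ _ hpdvd with hdU | hdV
      · obtain ⟨k, hk⟩ := hpodd
        have hUb : U (bp k) = (q : ℤ) := by rw [U_bp, hk]
        have hbdvd : bp k ∣ a := dvd_of (by rw [hUb]; exact ⟨k, hk⟩) (hUb ▸ hdU) (by rw [V_bp]; exact one_dvd _)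
        obtain ⟨c, hc⟩ := hbdvd
        rcases hirr.isUnit_or_isUnit hc with h | h
        · exact absurd ((UV_isUnit h).1) (hUb ▸ hp.not_unit)
        · obtain ⟨hUc, hVc⟩ := UV_isUnit h
          apply hnp
          apply prime_of
          · rw [hc, U_mul, hUb]
            rw [Int.prime_iff_natAbs_prime]
            rcases Int.isUnit_iff.1 hUc with h2 | h2 <;> simp [h2] <;> exact hq
          · rw [hc, U_mul, hUb]
            rcases Int.isUnit_iff.1 hUc with h2 | h2 <;> rw [h2]
            · rw [mul_one]; exact ⟨k, hk⟩
            · exact ⟨-k - 1, by rw [hk]; ring⟩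
          · rw [hc, V_mul, V_bp, one_mul]; exact hVc
      · obtain ⟨k, hk⟩ := hpodd
        have hVb : V (bp' k) = (q : ℤ) := by rw [V_bp', hk]
        have hbdvd : bp' k ∣ a :=
          dvd_of (by rw [U_bp']; exact odd_one) (by rw [U_bp']; exact one_dvd _) (hVb ▸ hdV)
        obtain ⟨c, hc⟩ := hbdvd
        rcases hirr.isUnit_or_isUnit hc with h | h
        · exact absurd ((UV_isUnit h).2) (hVb ▸ hp.not_unit)
        · obtain ⟨hUc, hVc⟩ := UV_isUnit h
          apply hnp
          apply prime_of'
          · rw [hc, V_mul, hVb]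
            rw [Int.prime_iff_natAbs_prime]
            rcases Int.isUnit_iff.1 hVc with h2 | h2 <;> simp [h2] <;> exact hq
          · rw [hc, V_mul, hVb]
            rcases Int.isUnit_iff.1 hVc with h2 | h2 <;> rw [h2]
            · rw [mul_one]; exact ⟨k, hk⟩
            · exact ⟨-k - 1, by rw [hk]; ring⟩
          · rw [hc, U_mul, U_bp', one_mul]; exact hUc
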